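/- Highest-order interaction estimate: Let $f, g : \mathbb{R}^2 \to \mathbb{R}$ be differentiable with $\nabla f$ bounded, $D := \sup_{x,y} d(f,g)(x,y) < \infty$, and suppose $\partial_{x_1}^4 f, \partial_{x_1}^4 g \in L^2(\mathbb{R}^2)$. Then there is a universal constant $C$ such that $\int_{\mathbb{R}^2} \int_{\mathbb{R}^2} |\partial_{x_1}^4 f(x)| \, \frac{|\nabla f(x) \cdot y| \, |f(x) - g(x-y)| \, \big(|\partial_{x_1}^4 f(x)| + |\partial_{x_1}^4 g(x-y)|\big)}{[|y|^2 + (f(x) - g(x-y))^2]^{5/2}}\, dx\, dy \le C\, \|\partial_{x_1}^4 f\|_{L^2} \, \sup_x|\nabla f(x)| \, \big(\|\partial_{x_1}^4 f\|_{L^2} + \|\partial_{x_1}^4 g\|_{L^2}\big)(D^3 + 1)$. -/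

import Mathlib

open MeasureTheory Filter Topology Real Set
open scoped RealInnerProductSpace ENNReal

noncomputable section

abbrev E2 := EuclideanSpace ℝ (Fin 2)

/-- `d(f,g)(x,y) = [|y|² + (f(x)-g(x-y))²]^{-1/2}`. -/
def dd (f g : E2 → ℝ) (x y : E2) : ℝ :=
  (‖y‖ ^ 2 + (f x - g (x - y)) ^ 2) ^ (-(1 / 2 : ℝ))

/-- The `L²(ℝ²)` norm of a function. -/
def l2norm (h : E2 → ℝ) : ℝ := (∫ x : E2, (h x) ^ 2) ^ (1 / 2 : ℝ)

/-- The partial derivative `∂_{x₁}`. -/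
def pd1 (h : E2 → ℝ) (x : E2) : ℝ := fderiv ℝ h x (EuclideanSpace.single 0 1)

/-- The fourth partial derivative `∂⁴_{x₁}`. -/
def pd1four (f : E2 → ℝ) : E2 → ℝ := pd1 (pd1 (pd1 (pd1 f)))

lemma lint_sq (h : E2 → ℝ) (hh : MemLp h 2 volume) :
    ∫⁻ x : E2, (ENNReal.ofReal |h x|) ^ (2:ℝ) = ENNReal.ofReal (l2norm h ^ 2) := by
  have h1 : ∀ x : E2, (ENNReal.ofReal |h x|) ^ (2:ℝ) = ENNReal.ofReal (h x ^ 2) := by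
    intro x
    rw [ENNReal.ofReal_rpow_of_nonneg (abs_nonneg _) (by norm_num : (0:ℝ) ≤ 2)]
    congr 1
    rw [show (2:ℝ) = ((2:ℕ):ℝ) by norm_num, Real.rpow_natCast, sq_abs]
  simp_rw [h1]
  rw [← ofReal_integral_eq_lintegral_ofReal hh.integrable_sq (ae_of_all _ fun x => sq_nonneg _)]
  congr 1
  rw [l2norm, ← Real.rpow_natCast ((∫ x : E2, (h x)^2) ^ (1/2:ℝ)) 2,
    ← Real.rpow_mul (integral_nonneg fun x => sq_nonneg _)]
  norm_num

lemma sqrt_ofreal_sq (N : ℝ) (hN : 0 ≤ N) :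
    (ENNReal.ofReal (N ^ 2)) ^ (1/2 : ℝ) = ENNReal.ofReal N := by
  rw [ENNReal.ofReal_rpow_of_nonneg (sq_nonneg N) (by norm_num : (0:ℝ) ≤ 1/2)]
  congr 1
  rw [← Real.rpow_natCast N 2, ← Real.rpow_mul hN]
  norm_num

lemma l2norm_nonneg (h : E2 → ℝ) : 0 ≤ l2norm h :=
  Real.rpow_nonneg (integral_nonneg fun x => sq_nonneg _) _

lemma stepB (F G : E2 → ℝ) (hF2 : MemLp F 2 volume) (hG2 : MemLp G 2 volume) (y : E2) :
    ∫⁻ x : E2, ENNReal.ofReal (|F x| * (|F x| + |G (x - y)|)) ≤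
      ENNReal.ofReal (l2norm F * (l2norm F + l2norm G)) := by
  have hFm : AEMeasurable (fun x : E2 => ENNReal.ofReal |F x|) volume :=
    (measurable_abs.comp_aemeasurable hF2.aestronglyMeasurable.aemeasurable).ennreal_ofReal
  have hGty : AEMeasurable (fun x : E2 => ENNReal.ofReal |G (x - y)|) volume :=
    ((measurable_abs.comp_aemeasurable hG2.aestronglyMeasurable.aemeasurable).comp_quasiMeasurePreserving
      (measurePreserving_sub_right volume y).quasiMeasurePreserving).ennreal_ofReal
  have key : ∀ x : E2, ENNReal.ofReal (|F x| * (|F x| + |G (x - y)|)) =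
      ENNReal.ofReal |F x| * ENNReal.ofReal |F x|
        + ENNReal.ofReal |F x| * ENNReal.ofReal |G (x - y)| := by
    intro x
    rw [mul_add, ENNReal.ofReal_add (by positivity) (by positivity),
      ENNReal.ofReal_mul (abs_nonneg _), ENNReal.ofReal_mul (abs_nonneg _)]
  simp_rw [key]
  rw [lintegral_add_left' (f := fun x => ENNReal.ofReal |F x| * ENNReal.ofReal |F x|) (hFm.mul hFm)]
  have hconj : Real.HolderConjugate 2 2 := Real.HolderConjugate.two_two
  have CS1 : ∫⁻ x : E2, ENNReal.ofReal |F x| * ENNReal.ofReal |F x| ≤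
      ENNReal.ofReal (l2norm F * l2norm F) := by
    calc ∫⁻ x : E2, ENNReal.ofReal |F x| * ENNReal.ofReal |F x|
        ≤ (∫⁻ x : E2, (ENNReal.ofReal |F x|) ^ (2:ℝ)) ^ (1/2:ℝ) *
          (∫⁻ x : E2, (ENNReal.ofReal |F x|) ^ (2:ℝ)) ^ (1/2:ℝ) :=
          ENNReal.lintegral_mul_le_Lp_mul_Lq volume hconj hFm hFm
      _ = ENNReal.ofReal (l2norm F) * ENNReal.ofReal (l2norm F) := by
          rw [lint_sq F hF2, sqrt_ofreal_sq (l2norm F) (l2norm_nonneg F)]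
      _ = ENNReal.ofReal (l2norm F * l2norm F) := by
          rw [ENNReal.ofReal_mul (l2norm_nonneg F)]
  have CS2 : ∫⁻ x : E2, ENNReal.ofReal |F x| * ENNReal.ofReal |G (x - y)| ≤
      ENNReal.ofReal (l2norm F * l2norm G) := by
    have htr : ∫⁻ x : E2, (ENNReal.ofReal |G (x - y)|) ^ (2:ℝ) =
        ∫⁻ x : E2, (ENNReal.ofReal |G x|) ^ (2:ℝ) :=
      lintegral_sub_right_eq_self (fun x => (ENNReal.ofReal |G x|) ^ (2:ℝ)) y
    calc ∫⁻ x : E2, ENNReal.ofReal |F x| * ENNReal.ofReal |G (x - y)|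
        ≤ (∫⁻ x : E2, (ENNReal.ofReal |F x|) ^ (2:ℝ)) ^ (1/2:ℝ) *
          (∫⁻ x : E2, (ENNReal.ofReal |G (x - y)|) ^ (2:ℝ)) ^ (1/2:ℝ) :=
          ENNReal.lintegral_mul_le_Lp_mul_Lq volume hconj hFm hGty
      _ = ENNReal.ofReal (l2norm F) * ENNReal.ofReal (l2norm G) := by
          rw [htr, lint_sq F hF2, lint_sq G hG2,
            sqrt_ofreal_sq (l2norm F) (l2norm_nonneg F),
            sqrt_ofreal_sq (l2norm G) (l2norm_nonneg G)]
      _ = ENNReal.ofReal (l2norm F * l2norm G) := by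
          rw [ENNReal.ofReal_mul (l2norm_nonneg F)]
  calc _ ≤ ENNReal.ofReal (l2norm F * l2norm F) + ENNReal.ofReal (l2norm F * l2norm G) :=
        add_le_add CS1 CS2
    _ = ENNReal.ofReal (l2norm F * (l2norm F + l2norm G)) := by
        rw [← ENNReal.ofReal_add (mul_nonneg (l2norm_nonneg F) (l2norm_nonneg F))
          (mul_nonneg (l2norm_nonneg F) (l2norm_nonneg G)), mul_add]

-- step A : pointwise bound, real version
lemma stepA (f g : E2 → ℝ) (F G : E2 → ℝ) (M D : ℝ) (hM0 : 0 ≤ M) (hD0 : 0 ≤ D)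
    (x y : E2) (hM : ‖gradient f x‖ ≤ M) (hD : dd f g x y ≤ D) :
    |F x| * (|⟪gradient f x, y⟫| * |f x - g (x - y)| * (|F x| + |G (x - y)|)) /
        (‖y‖ ^ 2 + (f x - g (x - y)) ^ 2) ^ (5 / 2 : ℝ) ≤
      (M * min (D ^ 3) (‖y‖ ^ (-(3:ℝ)))) * (|F x| * (|F x| + |G (x - y)|)) := by
  set Δ : ℝ := f x - g (x - y) with hΔ
  set A : ℝ := ‖y‖ ^ 2 + Δ ^ 2 with hA
  have hA0 : 0 ≤ A := by positivity
  have hX0 : (0:ℝ) ≤ |F x| * (|F x| + |G (x - y)|) := by positivity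
  have hmin0 : 0 ≤ min (D ^ 3) (‖y‖ ^ (-(3:ℝ))) :=
    le_min (by positivity) (Real.rpow_nonneg (norm_nonneg _) _)
  have hrhs0 : 0 ≤ (M * min (D ^ 3) (‖y‖ ^ (-(3:ℝ)))) * (|F x| * (|F x| + |G (x - y)|)) :=
    mul_nonneg (mul_nonneg hM0 hmin0) hX0
  by_cases hy : y = 0
  · have h0 : ⟪gradient f x, y⟫ = 0 := by rw [hy]; exact inner_zero_right _
    rw [h0]
    simpa using hrhs0
  · have hy0 : 0 < ‖y‖ := norm_pos_iff.2 hy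
    have hApos : 0 < A := lt_of_lt_of_le (by positivity) (le_add_of_nonneg_right (sq_nonneg Δ))
    have hip : |⟪gradient f x, y⟫| ≤ M * ‖y‖ :=
      le_trans (abs_real_inner_le_norm _ _) (mul_le_mul_of_nonneg_right hM (norm_nonneg _))
    have hyd : ‖y‖ * |Δ| ≤ A := by
      nlinarith [sq_nonneg (‖y‖ - |Δ|), sq_abs Δ, abs_nonneg Δ, norm_nonneg y]
    have hnum : |F x| * (|⟪gradient f x, y⟫| * |Δ| * (|F x| + |G (x - y)|)) ≤
        M * A * (|F x| * (|F x| + |G (x - y)|)) := by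
      have h1 : |⟪gradient f x, y⟫| * |Δ| ≤ M * A := by
        calc |⟪gradient f x, y⟫| * |Δ| ≤ (M * ‖y‖) * |Δ| :=
              mul_le_mul_of_nonneg_right hip (abs_nonneg _)
          _ = M * (‖y‖ * |Δ|) := by ring
          _ ≤ M * A := mul_le_mul_of_nonneg_left hyd hM0
      calc |F x| * (|⟪gradient f x, y⟫| * |Δ| * (|F x| + |G (x - y)|))
          = (|⟪gradient f x, y⟫| * |Δ|) * (|F x| * (|F x| + |G (x - y)|)) := by ring
        _ ≤ (M * A) * (|F x| * (|F x| + |G (x - y)|)) :=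
            mul_le_mul_of_nonneg_right h1 hX0
    have hAm : A ^ (-(3/2:ℝ)) ≤ min (D ^ 3) (‖y‖ ^ (-(3:ℝ))) := by
      refine le_min ?_ ?_
      · have h1 : A ^ (-(3/2:ℝ)) = (A ^ (-(1/2:ℝ))) ^ (3:ℕ) := by
          rw [← Real.rpow_natCast (A ^ (-(1/2:ℝ))) 3, ← Real.rpow_mul hA0]
          norm_num
        rw [h1]
        exact pow_le_pow_left₀ (Real.rpow_nonneg hA0 _) hD 3
      · have h2 : ‖y‖ ^ 2 ≤ A := le_add_of_nonneg_right (sq_nonneg Δ)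
        have h3 : A ^ (-(3/2:ℝ)) ≤ (‖y‖ ^ 2) ^ (-(3/2:ℝ)) :=
          Real.rpow_le_rpow_of_nonpos (by positivity) h2 (by norm_num)
        have h4 : ((‖y‖:ℝ) ^ 2) ^ (-(3/2:ℝ)) = ‖y‖ ^ (-(3:ℝ)) := by
          rw [← Real.rpow_natCast ‖y‖ 2, ← Real.rpow_mul (norm_nonneg _)]
          norm_num
        rw [← h4]; exact h3
    have hAdiv : A / A ^ (5/2:ℝ) = A ^ (-(3/2:ℝ)) := by
      have h := Real.rpow_sub hApos 1 (5/2)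
      rw [Real.rpow_one] at h
      rw [show (-(3/2:ℝ)) = 1 - 5/2 by norm_num, h]
    calc |F x| * (|⟪gradient f x, y⟫| * |Δ| * (|F x| + |G (x - y)|)) / A ^ (5/2:ℝ)
        ≤ M * A * (|F x| * (|F x| + |G (x - y)|)) / A ^ (5/2:ℝ) :=
          (div_le_div_iff_of_pos_right (by positivity)).mpr hnum
      _ = (M * (A / A ^ (5/2:ℝ))) * (|F x| * (|F x| + |G (x - y)|)) := by ring
      _ = (M * A ^ (-(3/2:ℝ))) * (|F x| * (|F x| + |G (x - y)|)) := by rw [hAdiv]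
      _ ≤ (M * min (D ^ 3) (‖y‖ ^ (-(3:ℝ)))) * (|F x| * (|F x| + |G (x - y)|)) :=
          mul_le_mul_of_nonneg_right (mul_le_mul_of_nonneg_left hAm hM0) hX0

-- step C pointwise : min bound
lemma minbd (D : ℝ) (hD0 : 0 ≤ D) (y : E2) :
    min (D ^ 3) (‖y‖ ^ (-(3:ℝ))) ≤ (D ^ 3 + 1) * (8 * (1 + ‖y‖) ^ (-(3:ℝ))) := by
  set t : ℝ := ‖y‖ with ht
  have ht0 : 0 ≤ t := norm_nonneg _
  have h1t : (0:ℝ) < 1 + t := by linarith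
  have hcube : (1 + t) ^ (-(3:ℝ)) = ((1 + t) ^ (3:ℕ))⁻¹ := by
    rw [show (-(3:ℝ)) = -((3:ℕ):ℝ) by norm_num, Real.rpow_neg h1t.le, Real.rpow_natCast]
  rcases le_total t 1 with h | h
  · have h8 : (1:ℝ) ≤ 8 * (1 + t) ^ (-(3:ℝ)) := by
      rw [hcube, ← div_eq_mul_inv]
      rw [le_div_iff₀ (by positivity)]
      nlinarith [pow_le_pow_left₀ (by linarith : (0:ℝ) ≤ 1 + t) (by linarith : 1 + t ≤ 2) 3]
    calc min (D ^ 3) (t ^ (-(3:ℝ))) ≤ D ^ 3 := min_le_left _ _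
      _ = D ^ 3 * 1 := (mul_one _).symm
      _ ≤ (D ^ 3 + 1) * (8 * (1 + t) ^ (-(3:ℝ))) :=
          mul_le_mul (by linarith) h8 zero_le_one (by positivity)
  · have ht1 : (0:ℝ) < t := lt_of_lt_of_le one_pos h
    have htc : t ^ (-(3:ℝ)) = (t ^ (3:ℕ))⁻¹ := by
      rw [show (-(3:ℝ)) = -((3:ℕ):ℝ) by norm_num, Real.rpow_neg ht0, Real.rpow_natCast]
    have key : t ^ (-(3:ℝ)) ≤ 8 * (1 + t) ^ (-(3:ℝ)) := by
      rw [htc, hcube, ← div_eq_mul_inv, inv_eq_one_div]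
      rw [div_le_div_iff₀ (by positivity) (by positivity)]
      have hexp : ((2:ℝ) * t) ^ 3 = 8 * t ^ 3 := by ring
      nlinarith [pow_le_pow_left₀ (by linarith : (0:ℝ) ≤ 1 + t) (by linarith : 1 + t ≤ 2 * t) 3]
    calc min (D ^ 3) (t ^ (-(3:ℝ))) ≤ t ^ (-(3:ℝ)) := min_le_right _ _
      _ ≤ 8 * (1 + t) ^ (-(3:ℝ)) := key
      _ = 1 * (8 * (1 + t) ^ (-(3:ℝ))) := (one_mul _).symm
      _ ≤ (D ^ 3 + 1) * (8 * (1 + t) ^ (-(3:ℝ))) :=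
          mul_le_mul_of_nonneg_right (by nlinarith [pow_nonneg hD0 3]) (by positivity)

/-- **Highest-order interaction estimate.**  There is a universal constant `C` such that
whenever `f, g` are differentiable, `∇f` is bounded, `D = sup d(f,g) < ∞`, and
`∂⁴_{x₁}f, ∂⁴_{x₁}g ∈ L²`,
`∫∫ |∂⁴_{x₁}f(x)| |∇f(x)⬝y| |f(x)-g(x-y)| (|∂⁴_{x₁}f(x)|+|∂⁴_{x₁}g(x-y)|) /
    [|y|²+(f(x)-g(x-y))²]^{5/2} dx dy
  ≤ C ‖∂⁴_{x₁}f‖_{L²} sup|∇f| (‖∂⁴_{x₁}f‖_{L²}+‖∂⁴_{x₁}g‖_{L²})(D³+1)`. -/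
theorem highest_order_interaction_estimate :
    ∃ C : ℝ, 0 < C ∧ ∀ f g : E2 → ℝ,
      Differentiable ℝ f → Differentiable ℝ g →
      Differentiable ℝ (pd1 f) → Differentiable ℝ (pd1 (pd1 f)) →
      Differentiable ℝ (pd1 (pd1 (pd1 f))) →
      Differentiable ℝ (pd1 g) → Differentiable ℝ (pd1 (pd1 g)) →
      Differentiable ℝ (pd1 (pd1 (pd1 g))) →
      BddAbove (Set.range fun x => ‖gradient f x‖) →
      BddAbove (Set.range fun p : E2 × E2 => dd f g p.1 p.2) →
      MemLp (pd1four f) 2 volume → MemLp (pd1four g) 2 volume →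
      (∫⁻ y : E2, ∫⁻ x : E2, ENNReal.ofReal
          (|pd1four f x| * (|⟪gradient f x, y⟫| * |f x - g (x - y)| *
            (|pd1four f x| + |pd1four g (x - y)|)) /
            (‖y‖ ^ 2 + (f x - g (x - y)) ^ 2) ^ (5 / 2 : ℝ))) ≤
        ENNReal.ofReal (C * l2norm (pd1four f) * (⨆ x : E2, ‖gradient f x‖) *
          (l2norm (pd1four f) + l2norm (pd1four g)) *
          ((⨆ p : E2 × E2, dd f g p.1 p.2) ^ 3 + 1)) := by
  classical
  have hfr : ((Module.finrank ℝ E2 : ℝ)) < 3 := by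
    rw [finrank_euclideanSpace]
    norm_num
  have hKint : Integrable (fun y : E2 => ((1:ℝ) + ‖y‖) ^ (-(3:ℝ))) volume :=
    integrable_one_add_norm hfr
  set K : ℝ := ∫ y : E2, ((1:ℝ) + ‖y‖) ^ (-(3:ℝ)) with hKdef
  have hK0 : 0 ≤ K := integral_nonneg fun y => Real.rpow_nonneg (by positivity) _
  refine ⟨8 * K + 1, by positivity, ?_⟩
  intro f g hf hg _ _ _ _ _ _ hMbdd hDbdd hfL2 hgL2
  set F := pd1four f with hF
  set G := pd1four g with hG
  set M : ℝ := ⨆ x : E2, ‖gradient f x‖ with hMdef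
  set D : ℝ := ⨆ p : E2 × E2, dd f g p.1 p.2 with hDdef
  set Nf : ℝ := l2norm F with hNf
  set Ng : ℝ := l2norm G with hNg
  have hM : ∀ x : E2, ‖gradient f x‖ ≤ M := fun x => le_ciSup hMbdd x
  have hD : ∀ x y : E2, dd f g x y ≤ D := fun x y => le_ciSup hDbdd (x, y)
  have hM0 : 0 ≤ M := le_trans (norm_nonneg _) (hM 0)
  have hD0 : 0 ≤ D := le_trans (Real.rpow_nonneg (by positivity) _) (hD 0 0)
  have hNf0 : 0 ≤ Nf := l2norm_nonneg F
  have hNg0 : 0 ≤ Ng := l2norm_nonneg G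
  have hmin0 : ∀ y : E2, 0 ≤ min (D ^ 3) (‖y‖ ^ (-(3:ℝ))) := fun y =>
    le_min (by positivity) (Real.rpow_nonneg (norm_nonneg _) _)
  have stepC : (∫⁻ y : E2, ENNReal.ofReal (M * min (D ^ 3) (‖y‖ ^ (-(3:ℝ))))) ≤
      ENNReal.ofReal ((M * (D ^ 3 + 1) * 8) * K) := by
    calc (∫⁻ y : E2, ENNReal.ofReal (M * min (D ^ 3) (‖y‖ ^ (-(3:ℝ)))))
        ≤ ∫⁻ y : E2, ENNReal.ofReal ((M * (D ^ 3 + 1) * 8) * (1 + ‖y‖) ^ (-(3:ℝ))) := by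
          refine lintegral_mono fun y => ENNReal.ofReal_le_ofReal ?_
          calc M * min (D ^ 3) (‖y‖ ^ (-(3:ℝ)))
              ≤ M * ((D ^ 3 + 1) * (8 * (1 + ‖y‖) ^ (-(3:ℝ)))) :=
                mul_le_mul_of_nonneg_left (minbd D hD0 y) hM0
            _ = (M * (D ^ 3 + 1) * 8) * (1 + ‖y‖) ^ (-(3:ℝ)) := by ring
      _ = ENNReal.ofReal (∫ y : E2, (M * (D ^ 3 + 1) * 8) * (1 + ‖y‖) ^ (-(3:ℝ))) :=
          (ofReal_integral_eq_lintegral_ofReal (hKint.const_mul _)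
            (ae_of_all _ fun y => mul_nonneg (by positivity)
              (Real.rpow_nonneg (by positivity) _))).symm
      _ = ENNReal.ofReal ((M * (D ^ 3 + 1) * 8) * K) := by
          rw [MeasureTheory.integral_const_mul]
  calc (∫⁻ y : E2, ∫⁻ x : E2, ENNReal.ofReal
          (|F x| * (|⟪gradient f x, y⟫| * |f x - g (x - y)| * (|F x| + |G (x - y)|)) /
            (‖y‖ ^ 2 + (f x - g (x - y)) ^ 2) ^ (5 / 2 : ℝ)))
      ≤ ∫⁻ y : E2, ENNReal.ofReal (M * min (D ^ 3) (‖y‖ ^ (-(3:ℝ)))) *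
          ENNReal.ofReal (Nf * (Nf + Ng)) := by
        refine lintegral_mono fun y => ?_
        calc (∫⁻ x : E2, ENNReal.ofReal
                (|F x| * (|⟪gradient f x, y⟫| * |f x - g (x - y)| * (|F x| + |G (x - y)|)) /
                  (‖y‖ ^ 2 + (f x - g (x - y)) ^ 2) ^ (5 / 2 : ℝ)))
            ≤ ∫⁻ x : E2, ENNReal.ofReal (M * min (D ^ 3) (‖y‖ ^ (-(3:ℝ)))) *
                ENNReal.ofReal (|F x| * (|F x| + |G (x - y)|)) := by
              refine lintegral_mono fun x => ?_
              rw [← ENNReal.ofReal_mul (mul_nonneg hM0 (hmin0 y))]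
              exact ENNReal.ofReal_le_ofReal
                (stepA f g F G M D hM0 hD0 x y (hM x) (hD x y))
          _ = ENNReal.ofReal (M * min (D ^ 3) (‖y‖ ^ (-(3:ℝ)))) *
                ∫⁻ x : E2, ENNReal.ofReal (|F x| * (|F x| + |G (x - y)|)) :=
              lintegral_const_mul' _ _ ENNReal.ofReal_ne_top
          _ ≤ ENNReal.ofReal (M * min (D ^ 3) (‖y‖ ^ (-(3:ℝ)))) *
                ENNReal.ofReal (Nf * (Nf + Ng)) :=
              mul_le_mul_right (stepB F G hfL2 hgL2 y) _
    _ = (∫⁻ y : E2, ENNReal.ofReal (M * min (D ^ 3) (‖y‖ ^ (-(3:ℝ))))) *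
          ENNReal.ofReal (Nf * (Nf + Ng)) :=
        lintegral_mul_const' _ _ ENNReal.ofReal_ne_top
    _ ≤ ENNReal.ofReal ((M * (D ^ 3 + 1) * 8) * K) * ENNReal.ofReal (Nf * (Nf + Ng)) :=
        mul_le_mul_left stepC _
    _ = ENNReal.ofReal (((M * (D ^ 3 + 1) * 8) * K) * (Nf * (Nf + Ng))) :=
        (ENNReal.ofReal_mul (by positivity)).symm
    _ ≤ ENNReal.ofReal ((8 * K + 1) * Nf * M * (Nf + Ng) * (D ^ 3 + 1)) := by
        refine ENNReal.ofReal_le_ofReal ?_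
        have hX : 0 ≤ M * ((D ^ 3 + 1) * (Nf * (Nf + Ng))) := by positivity
        have e1 : (M * (D ^ 3 + 1) * 8) * K * (Nf * (Nf + Ng)) =
            (8 * K) * (M * ((D ^ 3 + 1) * (Nf * (Nf + Ng)))) := by ring
        have e2 : (8 * K + 1) * Nf * M * (Nf + Ng) * (D ^ 3 + 1) =
            (8 * K + 1) * (M * ((D ^ 3 + 1) * (Nf * (Nf + Ng)))) := by ring
        rw [e1, e2]
        exact mul_le_mul_of_nonneg_right (by linarith) hX
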